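/- Let G = T^∞F be the infinite tree extension of a finite graph F of maximum degree at most d, and suppose G has an ℓ²-eigenvalue λ = (ζ + 1/ζ)√(d−1) for some ζ > 1, with normalized eigenvector ψ. Then for all ℓ ≥ 0, the mass of ψ on the vertices at distance exactly ℓ from F satisfies Σ_{u ∈ V_ℓ} |ψ(u)|² ≤ ζ^{−2ℓ+2}. -/

import Mathlib

noncomputable section

/-- Vertices of the infinite tree extension `T^∞ F`. -/
abbrev TInfVert (d : ℕ) (V₀ : Type) [Fintype V₀] (F : SimpleGraph V₀)
    [DecidableRel F.Adj] : Type :=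
  V₀ ⊕ ((Σ v : V₀, Fin (d - F.degree v)) × List (Fin (d - 1)))

/-- The infinite tree extension `T^∞ F`. -/
def TInf (d : ℕ) (V₀ : Type) [Fintype V₀] (F : SimpleGraph V₀) [DecidableRel F.Adj] :
    SimpleGraph (TInfVert d V₀ F) where
  Adj x y :=
    match x, y with
    | Sum.inl u, Sum.inl v => F.Adj u v
    | Sum.inl u, Sum.inr (t, l) => t.1 = u ∧ l = []
    | Sum.inr (t, l), Sum.inl u => t.1 = u ∧ l = []
    | Sum.inr (t, l), Sum.inr (s, m) => t = s ∧ ∃ a, m = l ++ [a] ∨ l = m ++ [a]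
  symm := by
    constructor
    rintro (u | ⟨t, l⟩) (v | ⟨s, m⟩) h
    · exact F.adj_symm h
    · exact h
    · exact h
    · exact ⟨h.1.symm, h.2.imp fun a ha => ha.symm⟩
  loopless := by
    constructor
    rintro (u | ⟨t, l⟩) h
    · exact F.loopless.irrefl u h
    · obtain ⟨a, ha | ha⟩ := h.2 <;> simpa using congrArg List.length ha

/-- Distance of a vertex of `T^∞ F` from the set `V₀` of original vertices. -/
def TIlevel (d : ℕ) (V₀ : Type) [Fintype V₀] (F : SimpleGraph V₀) [DecidableRel F.Adj] :
    TInfVert d V₀ F → ℕ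
  | Sum.inl _ => 0
  | Sum.inr (_, l) => l.length + 1

section Aux

variable {d : ℕ} {V₀ : Type} [Fintype V₀] {F : SimpleGraph V₀} [DecidableRel F.Adj]

/-- Parent of a tree vertex. -/
def TIpar (t : Σ v : V₀, Fin (d - F.degree v)) (l : List (Fin (d - 1))) : TInfVert d V₀ F :=
  if l = [] then Sum.inl t.1 else Sum.inr (t, l.dropLast)

lemma TIpar_concat (t : Σ v : V₀, Fin (d - F.degree v)) (l : List (Fin (d - 1)))
    (a : Fin (d - 1)) : TIpar (F := F) t (l ++ [a]) = Sum.inr (t, l) := by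
  simp [TIpar]

lemma adj_par (t : Σ v : V₀, Fin (d - F.degree v)) (l : List (Fin (d - 1))) :
    (TInf d V₀ F).Adj (Sum.inr (t, l)) (TIpar t l) := by
  rcases eq_or_ne l [] with rfl | hne
  · rw [TIpar, if_pos rfl]
    exact ⟨rfl, rfl⟩
  · rw [TIpar, if_neg hne]
    exact ⟨rfl, l.getLast hne, Or.inr (List.dropLast_append_getLast hne).symm⟩

lemma nbr_tsum (ψ : TInfVert d V₀ F → ℝ) (t : Σ v : V₀, Fin (d - F.degree v))
    (l : List (Fin (d - 1))) :
    (∑' y : {y // (TInf d V₀ F).Adj (Sum.inr (t, l)) y}, ψ (y : TInfVert d V₀ F))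
      = ψ (TIpar t l) + ∑ a : Fin (d - 1), ψ (Sum.inr (t, l ++ [a])) := by
  let f : Unit ⊕ Fin (d - 1) → {y // (TInf d V₀ F).Adj (Sum.inr (t, l)) y} :=
    fun i => match i with
    | Sum.inl _ => ⟨TIpar t l, adj_par t l⟩
    | Sum.inr a => ⟨Sum.inr (t, l ++ [a]), ⟨rfl, a, Or.inl rfl⟩⟩
  have hpc : ∀ a : Fin (d - 1), TIpar (F := F) t l ≠ Sum.inr (t, l ++ [a]) := by
    intro a h
    rcases eq_or_ne l [] with rfl | hne
    · rw [TIpar, if_pos rfl] at h; exact absurd h (by simp)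
    · rw [TIpar, if_neg hne] at h
      have h2 : l.dropLast = l ++ [a] := by simpa using h
      have h3 := congrArg List.length h2
      have h4 : 0 < l.length := List.length_pos_iff.mpr hne
      simp [List.length_dropLast] at h3
  have hbij : Function.Bijective f := by
    constructor
    · rintro (⟨⟩ | a) (⟨⟩ | b) hab
      · rfl
      · exact absurd (congrArg Subtype.val hab) (hpc b)
      · exact absurd (congrArg Subtype.val hab).symm (hpc a)
      · have h2 : (Sum.inr (t, l ++ [a]) : TInfVert d V₀ F) = Sum.inr (t, l ++ [b]) :=
          congrArg Subtype.val hab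
        obtain rfl : a = b := by simpa using h2
        rfl
    · rintro ⟨(u | ⟨s, m⟩), hy⟩
      · obtain ⟨h1, h2⟩ := hy
        subst h2
        exact ⟨Sum.inl (), Subtype.ext (by simp [f, TIpar, h1])⟩
      · obtain ⟨rfl, a, h | h⟩ := hy
        · exact ⟨Sum.inr a, Subtype.ext (by simp [f, h])⟩
        · subst h
          exact ⟨Sum.inl (), Subtype.ext (by simp [f, TIpar_concat])⟩
  rw [← (Equiv.ofBijective f hbij).tsum_eq, tsum_fintype, Fintype.sum_sum_type]
  simp only [Equiv.ofBijective_apply, Finset.univ_unique, Finset.sum_singleton]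
  rfl

lemma level_tsum (g : TInfVert d V₀ F → ℝ) (n : ℕ) :
    (∑' u : {x // TIlevel d V₀ F x = n + 1}, g (u : TInfVert d V₀ F))
      = ∑ t : Σ v : V₀, Fin (d - F.degree v), ∑ l : List.Vector (Fin (d - 1)) n,
          g (Sum.inr (t, l.1)) := by
  let f : ((Σ v : V₀, Fin (d - F.degree v)) × List.Vector (Fin (d - 1)) n) →
      {x // TIlevel d V₀ F x = n + 1} :=
    fun p => ⟨Sum.inr (p.1, p.2.1), by show p.2.1.length + 1 = n + 1; rw [p.2.2]⟩
  have hbij : Function.Bijective f := by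
    constructor
    · rintro ⟨t, l⟩ ⟨s, m⟩ h
      have h' := congrArg Subtype.val h
      simp only [f, Sum.inr.injEq, Prod.mk.injEq] at h'
      obtain ⟨rfl, h2⟩ := h'
      exact Prod.ext rfl (Subtype.ext h2)
    · rintro ⟨(u | ⟨t, l⟩), h⟩
      · exact absurd h (by simp [TIlevel])
      · have hl : l.length = n := by
          have : l.length + 1 = n + 1 := h
          omega
        exact ⟨(t, ⟨l, hl⟩), rfl⟩
  rw [← (Equiv.ofBijective f hbij).tsum_eq, tsum_fintype, Fintype.sum_prod_type]
  rfl

lemma level0_tsum (g : TInfVert d V₀ F → ℝ) :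
    (∑' u : {x // TIlevel d V₀ F x = 0}, g (u : TInfVert d V₀ F))
      = ∑ u : V₀, g (Sum.inl u) := by
  let f : V₀ → {x // TIlevel d V₀ F x = 0} := fun u => ⟨Sum.inl u, rfl⟩
  have hbij : Function.Bijective f := by
    constructor
    · intro u v h
      simpa [f] using congrArg Subtype.val h
    · rintro ⟨(u | ⟨t, l⟩), h⟩
      · exact ⟨u, rfl⟩
      · exact absurd h (by simp [TIlevel])
  rw [← (Equiv.ofBijective f hbij).tsum_eq, tsum_fintype]
  rfl

lemma vec_sum_succ {q : ℕ} (g : List (Fin q) → ℝ) (n : ℕ) :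
    ∑ m : List.Vector (Fin q) (n + 1), g m.1
      = ∑ l : List.Vector (Fin q) n, ∑ a : Fin q, g (l.1 ++ [a]) := by
  let f : List.Vector (Fin q) n × Fin q → List.Vector (Fin q) (n + 1) :=
    fun p => ⟨p.1.1 ++ [p.2], by simp [p.1.2]⟩
  have hbij : Function.Bijective f := by
    constructor
    · rintro ⟨⟨l, hl⟩, a⟩ ⟨⟨m, hm⟩, b⟩ h
      have h' : l ++ [a] = m ++ [b] := congrArg Subtype.val h
      obtain ⟨h1, h2⟩ := List.append_inj' h' (by simp)
      have h3 : a = b := by simpa using h2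
      subst h1; subst h3; rfl
    · rintro ⟨m, hm⟩
      rcases List.eq_nil_or_concat m with rfl | ⟨L, a, rfl⟩
      · exact absurd hm (by simp)
      · have hL : L.length = n := by
          have : L.length + 1 = n + 1 := by simpa using hm
          omega
        exact ⟨(⟨L, hL⟩, a), Subtype.ext (by simp [f])⟩
  rw [← (Equiv.ofBijective f hbij).sum_comp (fun m => g m.1), Fintype.sum_prod_type]
  rfl

end Aux

lemma decay_aux (ζ : ℝ) (hζ : 1 < ζ) (x : ℕ → ℝ) (hx0 : ∀ n, 0 ≤ x n) (hx1 : ∀ n, x n ≤ 1)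
    (hrec : ∀ n, (ζ + 1 / ζ) * x (n + 1) ≤ x n + x (n + 2)) :
    ∀ n, ζ * x (n + 1) ≤ x n := by
  have hζ0 : (0:ℝ) < ζ := lt_trans one_pos hζ
  by_contra hcon
  push_neg at hcon
  obtain ⟨n, hn⟩ := hcon
  set y : ℕ → ℝ := fun k => x (k + 1) - x k / ζ with hy
  have hyn : 0 < y n := by
    have : x n / ζ < x (n + 1) := by rw [div_lt_iff₀ hζ0]; nlinarith
    simp only [hy]; linarith
  have hstep : ∀ m, ζ * y m ≤ y (m + 1) := by
    intro m
    have h1 := hrec m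
    have e1 : (ζ + 1 / ζ) * x (m + 1) = ζ * x (m + 1) + x (m + 1) / ζ := by
      field_simp
    have e2 : ζ * y m = ζ * x (m + 1) - x m := by
      simp only [hy]; field_simp
    have e3 : y (m + 1) = x (m + 2) - x (m + 1) / ζ := rfl
    rw [e2, e3]; linarith
  have hpow : ∀ k, ζ ^ k * y n ≤ y (n + k) := by
    intro k
    induction k with
    | zero => simp
    | succ k ih =>
      calc ζ ^ (k + 1) * y n = ζ * (ζ ^ k * y n) := by ring
        _ ≤ ζ * y (n + k) := by exact mul_le_mul_of_nonneg_left ih hζ0.le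
        _ ≤ y (n + k + 1) := hstep (n + k)
        _ = y (n + (k + 1)) := by ring_nf
  have hyle : ∀ m, y m ≤ 1 := by
    intro m
    have h1 : 0 ≤ x m / ζ := div_nonneg (hx0 m) hζ0.le
    have := hx1 (m + 1)
    simp only [hy]; linarith
  obtain ⟨k, hk⟩ := pow_unbounded_of_one_lt (1 / y n) hζ
  have h2 : 1 < ζ ^ k * y n := by
    rw [div_lt_iff₀ hyn] at hk
    linarith
  linarith [hpow k, hyle (n + k), h2]


/-- Exponential decay of ℓ²-eigenvectors of `T^∞ F` with eigenvalue `(ζ + 1/ζ)√(d-1)`, `ζ > 1`: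
the mass at distance exactly `ℓ` from `V₀` is at most `ζ^{-2ℓ+2}`. -/
theorem statement1 (d : ℕ) (hd : 3 ≤ d) (V₀ : Type) [Fintype V₀]
    (F : SimpleGraph V₀) [DecidableRel F.Adj] (hdeg : ∀ v, F.degree v ≤ d)
    (ζ lam : ℝ) (hζ : 1 < ζ) (hlam : lam = (ζ + 1 / ζ) * Real.sqrt ((d : ℝ) - 1))
    (ψ : TInfVert d V₀ F → ℝ)
    (hsq : Summable fun x => ψ x ^ 2) (hnorm : ∑' x, ψ x ^ 2 = 1)
    (heig : ∀ x, (∑' y : {y // (TInf d V₀ F).Adj x y}, ψ (y : TInfVert d V₀ F)) = lam * ψ x) :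
    ∀ ℓ : ℕ, (∑' u : {x // TIlevel d V₀ F x = ℓ}, ψ (u : TInfVert d V₀ F) ^ 2)
      ≤ ζ ^ (2 - 2 * (ℓ : ℤ)) := by
  have hζ0 : (0:ℝ) < ζ := lt_trans one_pos hζ
  have hq : (0:ℝ) < (d:ℝ) - 1 := by
    have : (3:ℝ) ≤ (d:ℝ) := by exact_mod_cast hd
    linarith
  set rq := Real.sqrt ((d:ℝ) - 1) with hrq_def
  have hrq0 : 0 < rq := Real.sqrt_pos.mpr hq
  set s : ℕ → ℝ := fun n => ∑ t : Σ v : V₀, Fin (d - F.degree v),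
      ∑ l : List.Vector (Fin (d - 1)) n, ψ (Sum.inr (t, l.1)) ^ 2 with hs_def
  set p : ℕ → ℝ := fun n => ∑ t : Σ v : V₀, Fin (d - F.degree v),
      ∑ l : List.Vector (Fin (d - 1)) n, ψ (Sum.inr (t, l.1)) * ψ (TIpar t l.1) with hp_def
  have hmass : ∀ ℓ : ℕ,
      (∑' u : {x // TIlevel d V₀ F x = ℓ}, ψ (u : TInfVert d V₀ F) ^ 2) ≤ 1 := by
    intro ℓ
    have h1 : (∑' u : {x // TIlevel d V₀ F x = ℓ}, ψ (u : TInfVert d V₀ F) ^ 2)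
        = ∑' x, Set.indicator {x | TIlevel d V₀ F x = ℓ} (fun x => ψ x ^ 2) x :=
      tsum_subtype {x | TIlevel d V₀ F x = ℓ} (fun x => ψ x ^ 2)
    rw [h1, ← hnorm]
    exact Summable.tsum_le_tsum (fun x => Set.indicator_le_self' (fun y _ => sq_nonneg _) x)
      (hsq.indicator _) hsq
  have hs_eq : ∀ n, (∑' u : {x // TIlevel d V₀ F x = n + 1},
      ψ (u : TInfVert d V₀ F) ^ 2) = s n := by
    intro n
    rw [hs_def]
    exact level_tsum (fun x => ψ x ^ 2) n
  have hs0 : ∀ n, 0 ≤ s n := by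
    intro n
    rw [hs_def]
    exact Finset.sum_nonneg fun t _ => Finset.sum_nonneg fun l _ => sq_nonneg _
  have hs1 : ∀ n, s n ≤ 1 := fun n => (hs_eq n) ▸ hmass (n + 1)
  have hp_succ : ∀ n, p (n + 1) = ∑ t : Σ v : V₀, Fin (d - F.degree v),
      ∑ l : List.Vector (Fin (d - 1)) n, ∑ a : Fin (d - 1),
        ψ (Sum.inr (t, l.1 ++ [a])) * ψ (Sum.inr (t, l.1)) := by
    intro n
    rw [hp_def]
    refine Finset.sum_congr rfl fun t _ => ?_
    rw [vec_sum_succ (fun L => ψ (Sum.inr (t, L)) * ψ (TIpar t L)) n]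
    refine Finset.sum_congr rfl fun l _ => Finset.sum_congr rfl fun a _ => ?_
    rw [TIpar_concat]
  have key : ∀ (t : Σ v : V₀, Fin (d - F.degree v)) (l : List (Fin (d - 1))),
      lam * ψ (Sum.inr (t, l)) ^ 2 = ψ (Sum.inr (t, l)) * ψ (TIpar t l)
        + ∑ a : Fin (d - 1), ψ (Sum.inr (t, l ++ [a])) * ψ (Sum.inr (t, l)) := by
    intro t l
    have h2 := heig (Sum.inr (t, l))
    rw [nbr_tsum ψ t l] at h2
    calc lam * ψ (Sum.inr (t, l)) ^ 2
        = (lam * ψ (Sum.inr (t, l))) * ψ (Sum.inr (t, l)) := by ring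
      _ = (ψ (TIpar t l) + ∑ a : Fin (d - 1), ψ (Sum.inr (t, l ++ [a])))
            * ψ (Sum.inr (t, l)) := by rw [h2]
      _ = _ := by rw [add_mul, Finset.sum_mul, mul_comm (ψ (TIpar t l))]
  have hid : ∀ n, lam * s n = p n + p (n + 1) := by
    intro n
    rw [hp_succ n, hs_def, hp_def]
    simp only [Finset.mul_sum, ← Finset.sum_add_distrib]
    refine Finset.sum_congr rfl fun t _ => Finset.sum_congr rfl fun l _ => key t l.1
  have hCS : ∀ n, (p (n + 1)) ^ 2 ≤ ((d:ℝ) - 1) * s n * s (n + 1) := by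
    intro n
    have e1 : p (n + 1) = ∑ z : (Σ v : V₀, Fin (d - F.degree v))
        × List.Vector (Fin (d - 1)) n × Fin (d - 1),
        ψ (Sum.inr (z.1, z.2.1.1 ++ [z.2.2])) * ψ (Sum.inr (z.1, z.2.1.1)) := by
      rw [hp_succ n]
      simp only [Fintype.sum_prod_type]
    have hCS' := Finset.sum_mul_sq_le_sq_mul_sq Finset.univ
        (fun z : (Σ v : V₀, Fin (d - F.degree v))
          × List.Vector (Fin (d - 1)) n × Fin (d - 1) =>
            ψ (Sum.inr (z.1, z.2.1.1 ++ [z.2.2])))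
        (fun z => ψ (Sum.inr (z.1, z.2.1.1)))
    rw [← e1] at hCS'
    have e2 : ∑ z : (Σ v : V₀, Fin (d - F.degree v))
        × List.Vector (Fin (d - 1)) n × Fin (d - 1),
        ψ (Sum.inr (z.1, z.2.1.1 ++ [z.2.2])) ^ 2 = s (n + 1) := by
      rw [hs_def]
      simp only [Fintype.sum_prod_type]
      exact Finset.sum_congr rfl fun t _ =>
        (vec_sum_succ (fun L => ψ (Sum.inr (t, L)) ^ 2) n).symm
    have e3 : ∑ z : (Σ v : V₀, Fin (d - F.degree v))
        × List.Vector (Fin (d - 1)) n × Fin (d - 1),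
        ψ (Sum.inr (z.1, z.2.1.1)) ^ 2 = ((d:ℝ) - 1) * s n := by
      rw [hs_def]
      simp only [Fintype.sum_prod_type, Finset.sum_const, Finset.card_univ,
        Fintype.card_fin, nsmul_eq_mul, Finset.mul_sum]
      rw [Nat.cast_sub (by omega : 1 ≤ d), Nat.cast_one]
    rw [e2, e3] at hCS'
    calc (p (n + 1)) ^ 2 ≤ s (n + 1) * (((d:ℝ) - 1) * s n) := hCS'
      _ = ((d:ℝ) - 1) * s n * s (n + 1) := by ring
  have hpbound : ∀ n, p (n + 1) ≤ rq * (Real.sqrt (s n) * Real.sqrt (s (n + 1))) := by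
    intro n
    calc p (n + 1) ≤ |p (n + 1)| := le_abs_self _
      _ = Real.sqrt ((p (n + 1)) ^ 2) := (Real.sqrt_sq_eq_abs _).symm
      _ ≤ Real.sqrt (((d:ℝ) - 1) * s n * s (n + 1)) := Real.sqrt_le_sqrt (hCS n)
      _ = rq * (Real.sqrt (s n) * Real.sqrt (s (n + 1))) := by
          rw [Real.sqrt_mul (by positivity), Real.sqrt_mul hq.le, hrq_def, mul_assoc]
  have hx1' : ∀ n, Real.sqrt (s n) ≤ 1 := by
    intro n
    rw [show (1:ℝ) = Real.sqrt 1 from Real.sqrt_one.symm]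
    exact Real.sqrt_le_sqrt (hs1 n)
  have hrec : ∀ n, (ζ + 1 / ζ) * Real.sqrt (s (n + 1))
      ≤ Real.sqrt (s n) + Real.sqrt (s (n + 2)) := by
    intro n
    rcases (Real.sqrt_nonneg (s (n + 1))).eq_or_lt with h0 | hpos
    · rw [← h0, mul_zero]
      positivity
    · have h3 : lam * s (n + 1) ≤ rq * (Real.sqrt (s n) * Real.sqrt (s (n + 1)))
          + rq * (Real.sqrt (s (n + 1)) * Real.sqrt (s (n + 2))) := by
        rw [hid (n + 1)]
        exact add_le_add (hpbound n) (hpbound (n + 1))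
      have hss : Real.sqrt (s (n + 1)) * Real.sqrt (s (n + 1)) = s (n + 1) :=
        Real.mul_self_sqrt (hs0 (n + 1))
      have h4 : lam * s (n + 1)
          = ((ζ + 1 / ζ) * Real.sqrt (s (n + 1))) * (rq * Real.sqrt (s (n + 1))) := by
        rw [hlam]
        linear_combination (ζ + 1 / ζ) * rq * hss.symm
      have h5 : ((ζ + 1 / ζ) * Real.sqrt (s (n + 1))) * (rq * Real.sqrt (s (n + 1)))
          ≤ (Real.sqrt (s n) + Real.sqrt (s (n + 2))) * (rq * Real.sqrt (s (n + 1))) := by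
        rw [← h4]
        have e : rq * (Real.sqrt (s n) * Real.sqrt (s (n + 1)))
            + rq * (Real.sqrt (s (n + 1)) * Real.sqrt (s (n + 2)))
            = (Real.sqrt (s n) + Real.sqrt (s (n + 2))) * (rq * Real.sqrt (s (n + 1))) := by
          ring
        linarith
      exact le_of_mul_le_mul_right h5 (mul_pos hrq0 hpos)
  have hdecay := decay_aux ζ hζ (fun n => Real.sqrt (s n))
    (fun n => Real.sqrt_nonneg _) hx1' hrec
  have hgeo : ∀ n, Real.sqrt (s n) ≤ ζ⁻¹ ^ n := by
    intro n
    induction n with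
    | zero => simpa using hx1' 0
    | succ n ih =>
      have h1 : ζ * Real.sqrt (s (n + 1)) ≤ Real.sqrt (s n) := hdecay n
      have h2 : Real.sqrt (s (n + 1)) ≤ Real.sqrt (s n) * ζ⁻¹ := by
        have h3 := mul_le_mul_of_nonneg_right h1 (inv_nonneg.mpr hζ0.le)
        have h4 : ζ * Real.sqrt (s (n + 1)) * ζ⁻¹ = Real.sqrt (s (n + 1)) := by
          field_simp
        rw [h4] at h3
        exact h3
      calc Real.sqrt (s (n + 1)) ≤ Real.sqrt (s n) * ζ⁻¹ := h2
        _ ≤ ζ⁻¹ ^ n * ζ⁻¹ := mul_le_mul_of_nonneg_right ih (by positivity)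
        _ = ζ⁻¹ ^ (n + 1) := (pow_succ ζ⁻¹ n).symm
  intro ℓ
  match ℓ with
  | 0 =>
    have h1 := hmass 0
    have h2 : (1:ℝ) ≤ ζ ^ (2 - 2 * ((0:ℕ) : ℤ)) := by
      rw [show (2 - 2 * ((0:ℕ) : ℤ)) = ((2:ℕ) : ℤ) by norm_num, zpow_natCast]
      nlinarith
    exact h1.trans h2
  | (n + 1) =>
    rw [hs_eq n]
    have h1 : s n ≤ (ζ⁻¹ ^ n) ^ 2 := by
      rw [← Real.sq_sqrt (hs0 n)]
      exact pow_le_pow_left₀ (Real.sqrt_nonneg _) (hgeo n) 2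
    have h2 : ((ζ⁻¹ ^ n : ℝ)) ^ 2 = ζ ^ (2 - 2 * (((n + 1):ℕ) : ℤ)) := by
      rw [show (2 - 2 * (((n + 1):ℕ) : ℤ)) = -((2 * n : ℕ) : ℤ) by push_cast; ring]
      rw [zpow_neg, zpow_natCast, ← inv_pow, show 2 * n = n * 2 from mul_comm 2 n, pow_mul]
    rw [← h2]
    exact h1

end
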